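/- Given δ ≥ 0, L ≥ 1, and K ≥ 0, there exists D = D(δ, L, K) such that: if X, Y are δ-hyperbolic geodesic metric spaces, f: X → Y is an L-qi embedding, U ⊆ X is K-quasiconvex, x ∈ X, x′ is a nearest point projection of x on U in X, and y′ is a nearest point projection of f(x) on f(U) in Y, then d_Y(f(x′), y′) ≤ D. -/

import Mathlib

open Metric Set

/-- A geodesic from `a` to `b` in a metric space, parametrized by arc length
on the interval `[0, dist a b]`. -/
def IsGeodesicFrom {X : Type*} [MetricSpace X] (γ : ℝ → X) (a b : X) : Prop :=
  γ 0 = a ∧ γ (dist a b) = b ∧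
    ∀ s ∈ Set.Icc (0 : ℝ) (dist a b), ∀ t ∈ Set.Icc (0 : ℝ) (dist a b),
      dist (γ s) (γ t) = |s - t|

/-- A geodesic metric space: any two points are joined by a geodesic. -/
def GeodesicMetricSpace (X : Type*) [MetricSpace X] : Prop :=
  ∀ a b : X, ∃ γ : ℝ → X, IsGeodesicFrom γ a b

/-- The image of a geodesic segment from `a` to `b`. -/
def geodImage {X : Type*} [MetricSpace X] (γ : ℝ → X) (a b : X) : Set X :=
  γ '' Set.Icc 0 (dist a b)

/-- `X` is `δ`-hyperbolic: every geodesic triangle is `δ`-slim, i.e. each side is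
contained in the `δ`-neighbourhood of the union of the other two sides. -/
def DeltaHyp (X : Type*) [MetricSpace X] (δ : ℝ) : Prop :=
  ∀ (a b c : X) (γ₁ γ₂ γ₃ : ℝ → X),
    IsGeodesicFrom γ₁ a b → IsGeodesicFrom γ₂ b c → IsGeodesicFrom γ₃ a c →
      ∀ x ∈ geodImage γ₃ a c,
        Metric.infDist x (geodImage γ₁ a b ∪ geodImage γ₂ b c) ≤ δ

/-- `U` is a `K`-quasiconvex subset: every geodesic joining two points of `U`
lies in the (closed) `K`-neighbourhood of `U`. -/
def QuasiconvexSet {X : Type*} [MetricSpace X] (K : ℝ) (U : Set X) : Prop :=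
  ∀ a ∈ U, ∀ b ∈ U, ∀ γ : ℝ → X, IsGeodesicFrom γ a b →
    ∀ x ∈ geodImage γ a b, Metric.infDist x U ≤ K

/-- `u` is a nearest point projection of `x` on `U`. -/
def IsNPProj {X : Type*} [MetricSpace X] (x : X) (U : Set X) (u : X) : Prop :=
  u ∈ U ∧ ∀ u' ∈ U, dist x u ≤ dist x u'

/-- The set of all nearest point projections of points of `V` onto `U`
(denoted `P_U(V)` in the paper). -/
def projSet {X : Type*} [MetricSpace X] (U V : Set X) : Set X :=
  {u | ∃ v ∈ V, IsNPProj v U u}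

section Aux
variable {Z : Type*} [MetricSpace Z]

lemma le_infDist' {b : ℝ} {x : Z} {s : Set Z} (hs : s.Nonempty)
    (h : ∀ y ∈ s, b ≤ dist x y) : b ≤ infDist x s := by
  by_contra hlt
  obtain ⟨y, hy, hd⟩ := (infDist_lt_iff hs).1 (lt_of_not_ge hlt)
  exact absurd (h y hy) (not_le.2 hd)

namespace IsGeodesicFrom
variable {γ : ℝ → Z} {a b : Z}

lemma start (h : IsGeodesicFrom γ a b) : γ 0 = a := h.1
lemma finish (h : IsGeodesicFrom γ a b) : γ (dist a b) = b := h.2.1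

lemma dist_eq (h : IsGeodesicFrom γ a b) {s t : ℝ} (hs : s ∈ Icc (0:ℝ) (dist a b))
    (ht : t ∈ Icc (0:ℝ) (dist a b)) : dist (γ s) (γ t) = |s - t| := h.2.2 s hs t ht

lemma mem_image (_h : IsGeodesicFrom γ a b) {s : ℝ} (hs : s ∈ Icc (0:ℝ) (dist a b)) :
    γ s ∈ geodImage γ a b := ⟨s, hs, rfl⟩

lemma start_mem (h : IsGeodesicFrom γ a b) : a ∈ geodImage γ a b :=
  ⟨0, ⟨le_refl _, dist_nonneg⟩, h.start⟩

lemma finish_mem (h : IsGeodesicFrom γ a b) : b ∈ geodImage γ a b :=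
  ⟨dist a b, ⟨dist_nonneg, le_refl _⟩, h.finish⟩

lemma nonempty (h : IsGeodesicFrom γ a b) : (geodImage γ a b).Nonempty :=
  ⟨a, h.start_mem⟩

lemma dist_start (h : IsGeodesicFrom γ a b) {s : ℝ} (hs : s ∈ Icc (0:ℝ) (dist a b)) :
    dist a (γ s) = s := by
  conv_lhs => rw [← h.start]
  rw [h.dist_eq ⟨le_refl _, dist_nonneg⟩ hs]
  rw [abs_sub_comm, abs_of_nonneg (by simpa using hs.1)]
  ring

lemma dist_finish (h : IsGeodesicFrom γ a b) {s : ℝ} (hs : s ∈ Icc (0:ℝ) (dist a b)) :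
    dist (γ s) b = dist a b - s := by
  conv_lhs => rw [← h.finish]
  rw [h.dist_eq hs ⟨dist_nonneg, le_refl _⟩, abs_of_nonpos (by linarith [hs.2])]
  ring

lemma continuousOn (h : IsGeodesicFrom γ a b) : ContinuousOn γ (Icc 0 (dist a b)) := by
  apply LipschitzOnWith.continuousOn (K := 1)
  apply LipschitzOnWith.of_dist_le_mul
  intro s hs t ht
  rw [h.dist_eq hs ht]
  simp [Real.dist_eq]

lemma shift (h : IsGeodesicFrom γ a b) {s t : ℝ} (h0 : 0 ≤ s) (hst : s ≤ t)
    (ht : t ≤ dist a b) : IsGeodesicFrom (fun r => γ (s + r)) (γ s) (γ t) := by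
  have hd : dist (γ s) (γ t) = t - s := by
    rw [h.dist_eq ⟨h0, le_trans hst ht⟩ ⟨le_trans h0 hst, ht⟩, abs_of_nonpos (by linarith)]
    ring
  refine ⟨by simp, by rw [hd]; norm_num, ?_⟩
  intro s' hs' t' ht'
  rw [hd] at hs' ht'
  rw [h.dist_eq ⟨by linarith [hs'.1], by linarith [hs'.2]⟩
      ⟨by linarith [ht'.1], by linarith [ht'.2]⟩]
  congr 1; ring

end IsGeodesicFrom
end Aux

section Chain
variable {Z : Type*} [MetricSpace Z]

/-- Concatenation of two chains of points. -/
def chainAppend (y1 y2 : ℕ → Z) (n : ℕ) : ℕ → Z :=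
  fun i => if i ≤ n then y1 i else y2 (i - n)

lemma chainAppend_zero (y1 y2 : ℕ → Z) (n : ℕ) : chainAppend y1 y2 n 0 = y1 0 :=
  if_pos (Nat.zero_le n)

lemma chainAppend_last {y1 y2 : ℕ → Z} {n : ℕ} (h : y1 n = y2 0) (m : ℕ) :
    chainAppend y1 y2 n (n + m) = y2 m := by
  rcases Nat.eq_zero_or_pos m with hm | hm
  · subst hm; simp [chainAppend, h]
  · rw [chainAppend]
    rw [if_neg (by omega)]
    congr 1
    omega

lemma chainAppend_step {y1 y2 : ℕ → Z} {n m : ℕ} {B : ℝ} (h : y1 n = y2 0)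
    (h1 : ∀ i < n, dist (y1 i) (y1 (i+1)) ≤ B)
    (h2 : ∀ i < m, dist (y2 i) (y2 (i+1)) ≤ B) :
    ∀ i < n + m, dist (chainAppend y1 y2 n i) (chainAppend y1 y2 n (i+1)) ≤ B := by
  intro i hi
  by_cases hc : i + 1 ≤ n
  · rw [chainAppend, chainAppend, if_pos (by omega), if_pos hc]
    exact h1 i (by omega)
  · by_cases hc2 : i ≤ n
    · have hin : i = n := by omega
      subst hin
      rw [chainAppend, chainAppend, if_pos le_rfl, if_neg hc, h]
      have : i + 1 - i = 1 := by omega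
      rw [this]
      exact h2 0 (by omega)
    · rw [chainAppend, chainAppend, if_neg hc2, if_neg hc]
      have e : i + 1 - n = (i - n) + 1 := by omega
      rw [e]
      exact h2 (i - n) (by omega)

lemma chainAppend_prop {y1 y2 : ℕ → Z} {n m : ℕ} {P : Z → Prop}
    (h1 : ∀ i ≤ n, P (y1 i)) (h2 : ∀ i ≤ m, P (y2 i)) :
    ∀ i ≤ n + m, P (chainAppend y1 y2 n i) := by
  intro i hi
  rw [chainAppend]
  by_cases hc : i ≤ n
  · rw [if_pos hc]; exact h1 i hc
  · rw [if_neg hc]; exact h2 (i - n) (by omega)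

/-- The unit-speed chain along a geodesic. -/
lemma IsGeodesicFrom.unitChain {γ : ℝ → Z} {a b : Z} (h : IsGeodesicFrom γ a b) :
    ∃ y : ℕ → Z, y 0 = a ∧ y ⌈dist a b⌉₊ = b ∧ (∀ i, y i ∈ geodImage γ a b) ∧
      (∀ i, dist a (y i) ≤ dist a b) ∧ (∀ i, dist (y i) b ≤ dist a b) ∧
      ∀ i, dist (y i) (y (i+1)) ≤ 1 := by
  have hd : (0:ℝ) ≤ dist a b := dist_nonneg
  have hmem : ∀ i : ℕ, min (i:ℝ) (dist a b) ∈ Icc (0:ℝ) (dist a b) :=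
    fun i => ⟨le_min (Nat.cast_nonneg i) hd, min_le_right _ _⟩
  refine ⟨fun i => γ (min (i:ℝ) (dist a b)), ?_, ?_, ?_, ?_, ?_, ?_⟩
  · show γ (min ((0:ℕ):ℝ) (dist a b)) = a
    rw [Nat.cast_zero, min_eq_left hd, h.start]
  · show γ (min ((⌈dist a b⌉₊ : ℕ):ℝ) (dist a b)) = b
    rw [min_eq_right (Nat.le_ceil _), h.finish]
  · intro i
    exact h.mem_image (hmem i)
  · intro i
    show dist a (γ (min (i:ℝ) (dist a b))) ≤ dist a b
    rw [h.dist_start (hmem i)]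
    exact min_le_right _ _
  · intro i
    show dist (γ (min (i:ℝ) (dist a b))) b ≤ dist a b
    rw [h.dist_finish (hmem i)]
    have := (hmem i).1
    linarith
  · intro i
    show dist (γ (min (i:ℝ) (dist a b))) (γ (min ((i+1:ℕ):ℝ) (dist a b))) ≤ 1
    rw [h.dist_eq (hmem i) (hmem (i+1))]
    push_cast
    rcases le_total ((i:ℝ)+1) (dist a b) with hc | hc
    · rw [min_eq_left hc, min_eq_left (by linarith : (i:ℝ) ≤ dist a b), abs_le]
      constructor <;> linarith
    · rw [min_eq_right hc, abs_le]
      rcases le_total (i:ℝ) (dist a b) with hc2 | hc2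
      · rw [min_eq_left hc2]
        constructor <;> linarith
      · rw [min_eq_right hc2]
        constructor <;> linarith

/-- Key dyadic lemma: a point on a geodesic joining the endpoints of a chain
is within `δ * log₂(length) + B` of the chain. -/
lemma chain_infDist {δ B : ℝ} (hδ : 0 ≤ δ) (hB : 0 ≤ B)
    (hgeo : GeodesicMetricSpace Z) (hhyp : DeltaHyp Z δ) :
    ∀ (k n : ℕ), n ≤ 2 ^ k → ∀ y : ℕ → Z, (∀ i < n, dist (y i) (y (i+1)) ≤ B) →
      ∀ σ : ℝ → Z, IsGeodesicFrom σ (y 0) (y n) →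
        ∀ m ∈ geodImage σ (y 0) (y n), infDist m (y '' Iic n) ≤ δ * k + B := by
  have base : ∀ (n : ℕ), n ≤ 1 → ∀ y : ℕ → Z, (∀ i < n, dist (y i) (y (i+1)) ≤ B) →
      ∀ σ : ℝ → Z, IsGeodesicFrom σ (y 0) (y n) →
        ∀ m ∈ geodImage σ (y 0) (y n), infDist m (y '' Iic n) ≤ B := by
    intro n hn y hy σ hσ m hm
    obtain ⟨s, hs, rfl⟩ := hm
    have h0 : dist (y 0) (σ s) = s := hσ.dist_start hs
    have hmem : y 0 ∈ y '' Iic n := ⟨0, by simp, rfl⟩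
    calc infDist (σ s) (y '' Iic n) ≤ dist (σ s) (y 0) := infDist_le_dist_of_mem hmem
      _ = s := by rw [dist_comm]; exact h0
      _ ≤ dist (y 0) (y n) := hs.2
      _ ≤ B := by
          interval_cases n
          · simp [hB]
          · exact hy 0 (by norm_num)
  intro k
  induction k with
  | zero =>
    intro n hn y hy σ hσ m hm
    have := base n (by simpa using hn) y hy σ hσ m hm
    simpa using this
  | succ k ih =>
    intro n hn y hy σ hσ m hm
    rcases le_or_gt n 1 with hn1 | hn1
    · have := base n hn1 y hy σ hσ m hm
      have hk : (0:ℝ) ≤ δ * (k+1 : ℕ) := by positivity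
      linarith
    set h := (n + 1) / 2 with hh
    have hpow : 2 ^ (k+1) = 2 ^ k * 2 := by rw [pow_succ]
    have hh1 : h ≤ 2 ^ k := by omega
    have hh2 : n - h ≤ 2 ^ k := by omega
    have hhn : h ≤ n := by omega
    obtain ⟨σ₁, hσ₁⟩ := hgeo (y 0) (y h)
    obtain ⟨σ₂, hσ₂⟩ := hgeo (y h) (y n)
    have slim := hhyp (y 0) (y h) (y n) σ₁ σ₂ σ hσ₁ hσ₂ hσ m hm
    refine le_of_forall_pos_le_add ?_
    intro ε hε
    have hne : (geodImage σ₁ (y 0) (y h) ∪ geodImage σ₂ (y h) (y n)).Nonempty :=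
      ⟨y 0, Or.inl hσ₁.start_mem⟩
    obtain ⟨m', hm', hd'⟩ := (infDist_lt_iff hne).1 (lt_of_le_of_lt slim (lt_add_of_pos_right δ hε))
    have hsub1 : y '' Iic h ⊆ y '' Iic n := image_mono (Iic_subset_Iic.2 hhn)
    rcases hm' with hml | hmr
    · have H := ih h hh1 y (fun i hi => hy i (by omega)) σ₁ hσ₁ m' hml
      have h1 : infDist m (y '' Iic n) ≤ infDist m (y '' Iic h) :=
        infDist_le_infDist_of_subset hsub1 ⟨y 0, 0, by simp, rfl⟩
      have h2 : infDist m (y '' Iic h) ≤ infDist m' (y '' Iic h) + dist m m' :=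
        infDist_le_infDist_add_dist
      push_cast
      push_cast at H
      linarith
    · set y2 : ℕ → Z := fun i => y (h + i) with hy2
      have e : h + (n - h) = n := by omega
      have e0 : y2 0 = y h := by simp only [hy2, Nat.add_zero]
      have e1 : y2 (n - h) = y n := by simp only [hy2]; rw [e]
      have hstep2 : ∀ i < n - h, dist (y2 i) (y2 (i+1)) ≤ B := by
        intro i hi
        simp only [hy2]
        exact hy (h + i) (by omega)
      have H := ih (n - h) hh2 y2 hstep2 σ₂ (by rw [e0, e1]; exact hσ₂) m'
        (by rw [e0, e1]; exact hmr)
      have hsub2 : y2 '' Iic (n - h) ⊆ y '' Iic n := by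
        rintro z ⟨i, hi, rfl⟩
        exact ⟨h + i, by simp at hi ⊢; omega, by simp only [hy2]⟩
      have h1 : infDist m (y '' Iic n) ≤ infDist m (y2 '' Iic (n - h)) :=
        infDist_le_infDist_of_subset hsub2 ⟨y2 0, 0, by simp, rfl⟩
      have h2 : infDist m (y2 '' Iic (n - h)) ≤ infDist m' (y2 '' Iic (n - h)) + dist m m' :=
        infDist_le_infDist_add_dist
      push_cast
      push_cast at H
      linarith

end Chain


section Proj
variable {Z : Type*} [MetricSpace Z]

/-- Projection lemma: the nearest point projection `x'` of `x` on a `K`-quasiconvex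
set lies close to any geodesic from `x` to a point of `U`. -/
lemma proj_near_geodesic {δ K : ℝ} (hδ : 0 ≤ δ) (hK : 0 ≤ K)
    (hgeo : GeodesicMetricSpace Z) (hhyp : DeltaHyp Z δ)
    {U : Set Z} (hU : QuasiconvexSet K U) {x x' : Z} (hproj : IsNPProj x U x')
    {u : Z} (hu : u ∈ U) {γ : ℝ → Z} (hγ : IsGeodesicFrom γ x u) :
    infDist x' (geodImage γ x u) ≤ 3*δ + K := by
  obtain ⟨η₁, hη₁⟩ := hgeo x x'
  obtain ⟨η₂, hη₂⟩ := hgeo x' u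
  set F : ℝ → ℝ :=
    fun s => infDist (γ s) (geodImage η₁ x x') - infDist (γ s) (geodImage η₂ x' u) with hF
  have hcont : ContinuousOn F (Icc 0 (dist x u)) := by
    apply ContinuousOn.sub
    · exact (continuous_infDist_pt _).comp_continuousOn hγ.continuousOn
    · exact (continuous_infDist_pt _).comp_continuousOn hγ.continuousOn
  have hF0 : F 0 ≤ 0 := by
    have h1 : infDist (γ 0) (geodImage η₁ x x') = 0 := by
      rw [hγ.start]
      exact infDist_zero_of_mem hη₁.start_mem
    have h2 : 0 ≤ infDist (γ 0) (geodImage η₂ x' u) := infDist_nonneg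
    simp only [hF]
    linarith
  have hFd : 0 ≤ F (dist x u) := by
    have h1 : infDist (γ (dist x u)) (geodImage η₂ x' u) = 0 := by
      rw [hγ.finish]
      exact infDist_zero_of_mem hη₂.finish_mem
    have h2 : 0 ≤ infDist (γ (dist x u)) (geodImage η₁ x x') := infDist_nonneg
    simp only [hF]
    linarith
  obtain ⟨sw, hsw, hFsw⟩ := intermediate_value_Icc dist_nonneg hcont ⟨hF0, hFd⟩
  set w := γ sw with hw
  have hweq : infDist w (geodImage η₁ x x') = infDist w (geodImage η₂ x' u) := by
    have : F sw = 0 := hFsw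
    simp only [hF] at this
    linarith
  have slim := hhyp x x' u η₁ η₂ γ hη₁ hη₂ hγ w (hγ.mem_image hsw)
  refine le_of_forall_pos_le_add ?_
  intro ε hε
  set ε' := ε / 4 with hε'
  have hε'pos : 0 < ε' := by positivity
  have hne : (geodImage η₁ x x' ∪ geodImage η₂ x' u).Nonempty := ⟨x, Or.inl hη₁.start_mem⟩
  obtain ⟨q, hq, hdq⟩ := (infDist_lt_iff hne).1 (lt_of_le_of_lt slim (lt_add_of_pos_right δ hε'pos))
  have hboth : infDist w (geodImage η₁ x x') < δ + ε' ∧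
      infDist w (geodImage η₂ x' u) < δ + ε' := by
    rcases hq with hql | hqr
    · have h1 : infDist w (geodImage η₁ x x') < δ + ε' :=
        lt_of_le_of_lt (infDist_le_dist_of_mem hql) hdq
      exact ⟨h1, by rw [← hweq]; exact h1⟩
    · have h1 : infDist w (geodImage η₂ x' u) < δ + ε' :=
        lt_of_le_of_lt (infDist_le_dist_of_mem hqr) hdq
      exact ⟨by rw [hweq]; exact h1, h1⟩
  obtain ⟨a', ha', hda'⟩ := (infDist_lt_iff hη₁.nonempty).1 hboth.1
  obtain ⟨b', hb', hdb'⟩ := (infDist_lt_iff hη₂.nonempty).1 hboth.2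
  have hqc : infDist b' U ≤ K := hU x' hproj.1 u hu η₂ hη₂ b' hb'
  have hUne : U.Nonempty := ⟨x', hproj.1⟩
  obtain ⟨ub, hub, hdub⟩ := (infDist_lt_iff hUne).1 (lt_of_le_of_lt hqc (lt_add_of_pos_right K hε'pos))
  obtain ⟨s₁, hs₁, rfl⟩ := ha'
  have hxa : dist x (η₁ s₁) = s₁ := hη₁.dist_start hs₁
  have hax : dist (η₁ s₁) x' = dist x x' - s₁ := hη₁.dist_finish hs₁
  have hnpp : dist x x' ≤ dist x ub := hproj.2 ub hub
  have hchain : dist x ub ≤ dist x (η₁ s₁) + dist (η₁ s₁) w + dist w b' + dist b' ub := by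
    calc dist x ub ≤ dist x w + dist w ub := dist_triangle _ _ _
      _ ≤ dist x w + (dist w b' + dist b' ub) := by linarith [dist_triangle w b' ub]
      _ ≤ (dist x (η₁ s₁) + dist (η₁ s₁) w) + (dist w b' + dist b' ub) := by
          linarith [dist_triangle x (η₁ s₁) w]
      _ = _ := by ring
  have hwa : dist (η₁ s₁) w < δ + ε' := by rw [dist_comm]; exact hda'
  have hax' : dist (η₁ s₁) x' ≤ 2*δ + K + 3*ε' := by
    rw [hax]; linarith
  have hxw : dist x' w ≤ 3*δ + K + 4*ε' := by
    calc dist x' w ≤ dist x' (η₁ s₁) + dist (η₁ s₁) w := dist_triangle _ _ _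
      _ ≤ (2*δ + K + 3*ε') + (δ + ε') := by rw [dist_comm x' (η₁ s₁)]; linarith
      _ = 3*δ + K + 4*ε' := by ring
  calc infDist x' (geodImage γ x u) ≤ dist x' w := infDist_le_dist_of_mem (hγ.mem_image hsw)
    _ ≤ 3*δ + K + 4*ε' := hxw
    _ = 3*δ + K + ε := by rw [hε']; ring

end Proj


section Stability
variable {Z : Type*} [MetricSpace Z]

/-- The stability constant for points of a geodesic near a quasi-geodesic. -/
noncomputable def stabR0 (δ L : ℝ) : ℝ :=
  max 1 (2 * (1 + 2*L + δ + (δ / Real.log 2) *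
    (Real.log (Real.log 2 / (2*(δ+1)*(6*L+2)))⁻¹ +
      (Real.log 2 / (2*(δ+1)*(6*L+2))) * (L^2 + 2*L + 8))))

lemma one_le_stabR0 (δ L : ℝ) : 1 ≤ stabR0 δ L := le_max_left _ _

set_option maxHeartbeats 2000000 in
/-- Every point of a geodesic is within `stabR0 δ L` of the image of an
`(L,L)`-quasi-geodesic with the same endpoints. -/
lemma geod_near_qgeod {δ L : ℝ} (hδ : 0 ≤ δ) (hL : 1 ≤ L)
    (hgeo : GeodesicMetricSpace Z) (hhyp : DeltaHyp Z δ)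
    (T : ℝ) (hT : 0 ≤ T) (c : ℝ → Z)
    (hc : ∀ s ∈ Icc (0:ℝ) T, ∀ t ∈ Icc (0:ℝ) T,
        |s - t| / L - L ≤ dist (c s) (c t) ∧ dist (c s) (c t) ≤ L * |s - t| + L)
    (σ : ℝ → Z) (hσ : IsGeodesicFrom σ (c 0) (c T)) :
    ∀ s ∈ Icc (0:ℝ) (dist (c 0) (c T)), infDist (σ s) (c '' Icc 0 T) ≤ stabR0 δ L := by
  have hLpos : (0:ℝ) < L := by linarith
  set dT := dist (c 0) (c T) with hdT
  have hdT0 : 0 ≤ dT := dist_nonneg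
  have hcim : (c '' Icc 0 T).Nonempty := ⟨c 0, 0, ⟨le_rfl, hT⟩, rfl⟩
  set g : ℝ → ℝ := fun s => infDist (σ s) (c '' Icc 0 T) with hg
  have hgcont : ContinuousOn g (Icc 0 dT) :=
    (continuous_infDist_pt _).comp_continuousOn hσ.continuousOn
  obtain ⟨s0, hs0, hmax⟩ := isCompact_Icc.exists_isMaxOn (nonempty_Icc.mpr hdT0) hgcont
  set D0 := g s0 with hD0def
  suffices hkey : D0 ≤ stabR0 δ L by
    intro s hs
    exact le_trans (hmax hs) hkey
  rcases le_or_gt D0 1 with hD1 | hD1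
  · exact le_trans hD1 (one_le_stabR0 δ L)
  have hD0pos : (0:ℝ) < D0 := by linarith
  set m := σ s0 with hm_def
  have hlb : ∀ t ∈ Icc (0:ℝ) T, D0 ≤ dist m (c t) := by
    intro t ht
    exact infDist_le_dist_of_mem ⟨t, ht, rfl⟩
  set sa := max 0 (s0 - 2*D0) with hsa_def
  set sb := min dT (s0 + 2*D0) with hsb_def
  have hsa' : sa ∈ Icc (0:ℝ) dT := ⟨le_max_left _ _, by
    rcases max_cases (0:ℝ) (s0 - 2*D0) with ⟨h1, _⟩ | ⟨h1, _⟩ <;> rw [hsa_def, h1]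
    · exact hdT0
    · linarith [hs0.2]⟩
  have hsb' : sb ∈ Icc (0:ℝ) dT := ⟨by
      rcases min_cases dT (s0 + 2*D0) with ⟨h1, _⟩ | ⟨h1, _⟩ <;> rw [hsb_def, h1]
      · exact hdT0
      · linarith [hs0.1], min_le_left _ _⟩
  have hsas0 : sa ≤ s0 := max_le (hs0.1) (by linarith)
  have hs0sb : s0 ≤ sb := le_min hs0.2 (by linarith)
  set a := σ sa with ha_def
  set b := σ sb with hb_def
  have hma : dist m a ≤ 2*D0 := by
    rw [hm_def, ha_def, hσ.dist_eq hs0 hsa', abs_of_nonneg (by linarith)]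
    have : s0 - 2*D0 ≤ sa := le_max_right _ _
    linarith
  have hmb : dist m b ≤ 2*D0 := by
    rw [hm_def, hb_def, hσ.dist_eq hs0 hsb', abs_of_nonpos (by linarith)]
    have : sb ≤ s0 + 2*D0 := min_le_right _ _
    linarith
  -- choice of t_a
  have hta_pack : ∃ ta, ta ∈ Icc (0:ℝ) T ∧ dist a (c ta) < D0 + 1 ∧
      ∀ q : Z, dist a q ≤ dist a (c ta) → D0 - 1 ≤ dist m q := by
    by_cases hca : 0 ≤ s0 - 2*D0
    · have hsaeq : sa = s0 - 2*D0 := max_eq_right hca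
      have hma2 : dist m a = 2*D0 := by
        rw [hm_def, ha_def, hσ.dist_eq hs0 hsa', hsaeq, abs_of_nonneg (by linarith)]
        ring
      have hgsa : infDist a (c '' Icc 0 T) ≤ D0 := hmax hsa'
      obtain ⟨p, hp, hdp⟩ := (infDist_lt_iff hcim).1
        (lt_of_le_of_lt hgsa (by linarith : D0 < D0 + 1))
      obtain ⟨ta, hta, rfl⟩ := hp
      refine ⟨ta, hta, hdp, ?_⟩
      intro q hq
      have h1 : dist m a ≤ dist m q + dist q a := dist_triangle _ _ _
      rw [dist_comm q a] at h1
      linarith [hma2, hq, hdp]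
    · have hsaeq : sa = 0 := max_eq_left (by linarith)
      have ha0 : a = c 0 := by rw [ha_def, hsaeq, hσ.start]
      refine ⟨0, ⟨le_rfl, hT⟩, ?_, ?_⟩
      · rw [ha0, dist_self]
        linarith
      · intro q hq
        rw [ha0, dist_self] at hq
        have hq0 : dist a q = 0 := le_antisymm (by rwa [ha0]) dist_nonneg
        have : q = a := by rw [dist_comm] at hq0; exact (dist_eq_zero.1 hq0)
        rw [this, ha0]
        have := hlb 0 ⟨le_rfl, hT⟩
        linarith
  -- choice of t_b
  have htb_pack : ∃ tb, tb ∈ Icc (0:ℝ) T ∧ dist (c tb) b < D0 + 1 ∧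
      ∀ q : Z, dist q b ≤ dist (c tb) b → D0 - 1 ≤ dist m q := by
    by_cases hcb : s0 + 2*D0 ≤ dT
    · have hsbeq : sb = s0 + 2*D0 := min_eq_right hcb
      have hmb2 : dist m b = 2*D0 := by
        rw [hm_def, hb_def, hσ.dist_eq hs0 hsb', hsbeq, abs_of_nonpos (by linarith)]
        ring
      have hgsb : infDist b (c '' Icc 0 T) ≤ D0 := hmax hsb'
      obtain ⟨p, hp, hdp⟩ := (infDist_lt_iff hcim).1
        (lt_of_le_of_lt hgsb (by linarith : D0 < D0 + 1))
      obtain ⟨tb, htb, rfl⟩ := hp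
      rw [dist_comm b (c tb)] at hdp
      refine ⟨tb, htb, hdp, ?_⟩
      intro q hq
      have h1 : dist m b ≤ dist m q + dist q b := dist_triangle _ _ _
      linarith [hmb2, hq, hdp]
    · have hsbeq : sb = dT := min_eq_left (by linarith)
      have hb0 : b = c T := by rw [hb_def, hsbeq, hdT, hσ.finish]
      refine ⟨T, ⟨hT, le_rfl⟩, ?_, ?_⟩
      · rw [hb0, dist_self]
        linarith
      · intro q hq
        rw [hb0, dist_self] at hq
        have hq0 : dist q b = 0 := le_antisymm (by rwa [hb0]) dist_nonneg
        have : q = b := dist_eq_zero.1 hq0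
        rw [this, hb0]
        have := hlb T ⟨hT, le_rfl⟩
        linarith
  obtain ⟨ta, hta, hdta, hconna⟩ := hta_pack
  obtain ⟨tb, htb, hdtb, hconnb⟩ := htb_pack
  -- connector geodesics and chains
  obtain ⟨α, hα⟩ := hgeo a (c ta)
  obtain ⟨β, hβ⟩ := hgeo (c tb) b
  set da := dist a (c ta) with hda_def
  set db := dist (c tb) b with hdb_def
  obtain ⟨y1, hy10, hy1n, hy1mem, hy1da, _, hy1step⟩ := hα.unitChain
  obtain ⟨y3, hy30, hy3n, hy3mem, _, hy3db, hy3step⟩ := hβ.unitChain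
  set n₁ := ⌈da⌉₊ with hn₁
  set n₃ := ⌈db⌉₊ with hn₃
  -- the middle chain
  set n₂ := max 1 ⌈|tb - ta|⌉₊ with hn₂
  have hn₂pos : (0:ℝ) < n₂ := by
    have : 1 ≤ n₂ := le_max_left _ _
    exact_mod_cast Nat.lt_of_lt_of_le Nat.zero_lt_one this
  have htbta : |tb - ta| ≤ (n₂:ℝ) := le_trans (Nat.le_ceil _) (by exact_mod_cast le_max_right 1 ⌈|tb - ta|⌉₊)
  set u : ℕ → ℝ := fun i => ta + (tb - ta) * i / n₂ with hu
  have hu0 : u 0 = ta := by simp [hu]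
  have hun : u n₂ = tb := by
    rw [hu]
    field_simp
    ring
  have humem : ∀ i : ℕ, i ≤ n₂ → u i ∈ Icc (0:ℝ) T := by
    intro i hi
    have hr1 : (0:ℝ) ≤ (i:ℝ)/n₂ := by positivity
    have hr2 : (i:ℝ)/n₂ ≤ 1 := by
      rw [div_le_one hn₂pos]
      exact_mod_cast hi
    have he : u i = ta + (tb - ta) * ((i:ℝ)/n₂) := by rw [hu]; ring
    rcases le_total ta tb with hor | hor
    · constructor
      · rw [he]; nlinarith [hta.1]
      · rw [he]; nlinarith [htb.2]
    · constructor
      · rw [he]; nlinarith [htb.1]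
      · rw [he]; nlinarith [hta.2]
  set y2 : ℕ → Z := fun i => c (u i) with hy2
  have hy2step : ∀ i < n₂, dist (y2 i) (y2 (i+1)) ≤ 2*L := by
    intro i hi
    have h1 := (hc (u i) (humem i (by omega)) (u (i+1)) (humem (i+1) (by omega))).2
    have h2 : |u i - u (i+1)| ≤ 1 := by
      rw [hu]
      have : ta + (tb - ta) * i / n₂ - (ta + (tb - ta) * (i+1:ℕ) / n₂)
          = -((tb - ta) / n₂) := by
        push_cast
        field_simp
        ring
      rw [this, abs_neg, abs_div, abs_of_pos hn₂pos, div_le_one hn₂pos]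
      exact htbta
    calc dist (y2 i) (y2 (i+1)) ≤ L * |u i - u (i+1)| + L := h1
      _ ≤ L * 1 + L := by nlinarith
      _ = 2*L := by ring
  -- assemble the chain
  set ch12 := chainAppend y1 y2 n₁ with hch12
  set ch := chainAppend ch12 y3 (n₁ + n₂) with hch
  set N := n₁ + n₂ + n₃ with hN
  have hjoin1 : y1 n₁ = y2 0 := by
    rw [hy1n, hy2]
    simp only []
    rw [hu0]
  have hch12_0 : ch12 0 = a := by rw [hch12, chainAppend_zero, hy10]
  have hch12_last : ch12 (n₁ + n₂) = c tb := by
    rw [hch12, chainAppend_last hjoin1]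
    show c (u n₂) = c tb
    rw [hun]
  have hjoin2 : ch12 (n₁ + n₂) = y3 0 := by rw [hch12_last, hy30]
  have hch0 : ch 0 = a := by rw [hch, chainAppend_zero, hch12_0]
  have hchN : ch N = b := by
    rw [hch, hN, chainAppend_last hjoin2, hy3n]
  have hy1step' : ∀ i < n₁, dist (y1 i) (y1 (i+1)) ≤ 2*L := fun i _ =>
    le_trans (hy1step i) (by linarith)
  have hy3step' : ∀ i < n₃, dist (y3 i) (y3 (i+1)) ≤ 2*L := fun i _ =>
    le_trans (hy3step i) (by linarith)
  have hchstep : ∀ i < N, dist (ch i) (ch (i+1)) ≤ 2*L := by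
    rw [hch, hN]
    exact chainAppend_step hjoin2
      (by rw [hch12]; exact chainAppend_step hjoin1 hy1step' hy2step) hy3step'
  -- all chain points are far from m
  have hchfar : ∀ i ≤ N, D0 - 1 ≤ dist m (ch i) := by
    rw [hch, hN]
    apply chainAppend_prop (P := fun q => D0 - 1 ≤ dist m q)
    · rw [hch12]
      apply chainAppend_prop (P := fun q => D0 - 1 ≤ dist m q)
      · intro i _
        exact hconna (y1 i) (hy1da i)
      · intro i hi
        have := hlb (u i) (humem i hi)
        show D0 - 1 ≤ dist m (c (u i))
        linarith
    · intro i _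
      exact hconnb (y3 i) (hy3db i)
  -- the sub-geodesic from a to b
  set σ' : ℝ → Z := fun r => σ (sa + r) with hσ'
  have hσ'g : IsGeodesicFrom σ' a b := hσ.shift hsa'.1 (le_trans hsas0 hs0sb) hsb'.2
  have hdab : dist a b = sb - sa := by
    rw [ha_def, hb_def, hσ.dist_eq hsa' hsb', abs_of_nonpos (by linarith)]
    ring
  have hmmem : m ∈ geodImage σ' a b := by
    refine ⟨s0 - sa, ⟨by linarith, by rw [hdab]; linarith⟩, ?_⟩
    rw [hσ']
    show σ (sa + (s0 - sa)) = m
    rw [hm_def]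
    congr 1
    ring
  -- apply the chain lemma
  set k := Nat.clog 2 (N + 2) with hk
  have hNk : N ≤ 2 ^ k := le_trans (by omega) (Nat.le_pow_clog one_lt_two _)
  have hchain_lem := chain_infDist hδ (by linarith : (0:ℝ) ≤ 2*L) hgeo hhyp k N hNk ch hchstep
    σ' (by rw [hch0, hchN]; exact hσ'g) m (by rw [hch0, hchN]; exact hmmem)
  have hlow : D0 - 1 ≤ infDist m (ch '' Iic N) := by
    apply le_infDist' (⟨ch 0, ⟨0, by simp, rfl⟩⟩ : (ch '' Iic N).Nonempty)
    rintro z ⟨i, hi, rfl⟩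
    exact hchfar i hi
  have hmain : D0 ≤ 1 + 2*L + δ * k := by linarith
  -- numerical estimates
  set A := 6*L + 2 with hA
  set Cc := L^2 + 2*L + 8 with hCc
  have hApos : (0:ℝ) < A := by rw [hA]; linarith
  have hCcpos : (0:ℝ) < Cc := by rw [hCc]; nlinarith
  have hlog2 : (0:ℝ) < Real.log 2 := Real.log_pos one_lt_two
  set ρ := Real.log 2 / (2*(δ+1)*A) with hρ
  have hρpos : (0:ℝ) < ρ := by
    rw [hρ]
    positivity
  -- bound on N
  have hNreal : (N:ℝ) + 2 ≤ A * D0 + Cc := by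
    have hb1 : (n₁:ℝ) < da + 1 := Nat.ceil_lt_add_one dist_nonneg
    have hb3 : (n₃:ℝ) < db + 1 := Nat.ceil_lt_add_one dist_nonneg
    have hcc : dist (c ta) (c tb) ≤ 6*D0 + 2 := by
      calc dist (c ta) (c tb) ≤ dist (c ta) a + dist a m + dist m b + dist b (c tb) := by
            linarith [dist_triangle (c ta) a (c tb), dist_triangle a m (c tb),
              dist_triangle m b (c tb)]
        _ ≤ (D0+1) + 2*D0 + 2*D0 + (D0+1) := by
            rw [dist_comm (c ta) a, dist_comm a m, dist_comm b (c tb)]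
            linarith
        _ = 6*D0 + 2 := by ring
    have htata : |ta - tb| ≤ L * dist (c ta) (c tb) + L^2 := by
      have := (hc ta hta tb htb).1
      have h2 : |ta - tb| / L ≤ dist (c ta) (c tb) + L := by linarith
      calc |ta - tb| = (|ta - tb| / L) * L := by field_simp
        _ ≤ (dist (c ta) (c tb) + L) * L := by nlinarith [abs_nonneg (ta - tb)]
        _ = L * dist (c ta) (c tb) + L^2 := by ring
    have hb2 : (n₂:ℝ) ≤ |tb - ta| + 2 := by
      rcases max_cases 1 ⌈|tb - ta|⌉₊ with ⟨h1, h2⟩ | ⟨h1, h2⟩ <;> rw [hn₂, h1]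
      · push_cast
        have := abs_nonneg (tb - ta)
        linarith
      · have := Nat.ceil_lt_add_one (abs_nonneg (tb - ta))
        push_cast
        linarith
    have htbta2 : |tb - ta| ≤ 6*L*D0 + 2*L + L^2 := by
      rw [abs_sub_comm]
      nlinarith [htata, hcc]
    have hda1 : da < D0 + 1 := hdta
    have hdb1 : db < D0 + 1 := hdtb
    rw [hN]
    push_cast
    rw [hA, hCc]
    nlinarith
  have hMpos : (0:ℝ) < A * D0 + Cc := by positivity
  -- bound on k
  have hkreal : (k:ℝ) ≤ 1 + Real.log (A * D0 + Cc) / Real.log 2 := by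
    have hlogM : 0 ≤ Real.log (A * D0 + Cc) := Real.log_nonneg (by nlinarith)
    rcases Nat.eq_zero_or_pos k with hk0 | hkpos
    · rw [hk0]
      push_cast
      positivity
    · have hNN : 1 < N + 2 := by omega
      have hpow := Nat.pow_pred_clog_lt_self one_lt_two hNN
      rw [← hk] at hpow
      have hpowR : (2:ℝ) ^ (k - 1 : ℕ) < (N:ℝ) + 2 := by exact_mod_cast hpow
      have hlog1 : ((k:ℝ) - 1) * Real.log 2 ≤ Real.log (A * D0 + Cc) := by
        have h1 : ((k - 1 : ℕ):ℝ) * Real.log 2 = Real.log ((2:ℝ) ^ (k-1:ℕ)) :=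
          (Real.log_pow _ _).symm
        have h2 : Real.log ((2:ℝ) ^ (k-1:ℕ)) ≤ Real.log (A * D0 + Cc) :=
          Real.log_le_log (by positivity) (by linarith)
        have h3 : ((k - 1 : ℕ):ℝ) = (k:ℝ) - 1 := by
          push_cast [Nat.cast_sub hkpos]
          ring
        rw [← h3]
        linarith
      have h4 : (k:ℝ) - 1 ≤ Real.log (A * D0 + Cc) / Real.log 2 := by
        rw [le_div_iff₀ hlog2]
        linarith
      linarith
  -- bound on log
  have hlogbound : Real.log (A * D0 + Cc) ≤ Real.log ρ⁻¹ + ρ * (A * D0 + Cc) := by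
    have h2 : Real.log (ρ * (A * D0 + Cc)) ≤ ρ * (A * D0 + Cc) - 1 :=
      Real.log_le_sub_one_of_pos (by positivity)
    have h1 : Real.log (A * D0 + Cc) = Real.log ρ⁻¹ + Real.log (ρ * (A * D0 + Cc)) := by
      rw [← Real.log_mul (by positivity) (by positivity)]
      congr 1
      field_simp
    rw [h1]
    exact add_le_add_right (h2.trans (sub_le_self _ zero_le_one)) _
  -- conclude
  have hfrac : (δ / Real.log 2) * (ρ * A) = δ / (2*(δ+1)) := by
    rw [hρ]
    field_simp
  have hhalf : (δ / Real.log 2) * (ρ * A) * D0 ≤ D0 / 2 := by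
    rw [hfrac]
    have h1 : δ / (2*(δ+1)) ≤ 1/2 := by
      rw [div_le_div_iff₀ (by linarith) (by norm_num)]
      linarith
    nlinarith
  have hfinal : D0 ≤ 2 * (1 + 2*L + δ + (δ / Real.log 2) * (Real.log ρ⁻¹ + ρ * Cc)) := by
    have hq : (0:ℝ) ≤ δ / Real.log 2 := by positivity
    have h1 : δ * (k:ℝ) ≤ δ * (1 + Real.log (A * D0 + Cc) / Real.log 2) :=
      mul_le_mul_of_nonneg_left hkreal hδ
    have h2 : (δ / Real.log 2) * Real.log (A * D0 + Cc)
        ≤ (δ / Real.log 2) * (Real.log ρ⁻¹ + ρ * (A * D0 + Cc)) :=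
      mul_le_mul_of_nonneg_left hlogbound hq
    have h3 : δ * (1 + Real.log (A * D0 + Cc) / Real.log 2)
        = δ + (δ / Real.log 2) * Real.log (A * D0 + Cc) := by
      field_simp
    have h4 : (δ / Real.log 2) * (Real.log ρ⁻¹ + ρ * (A * D0 + Cc))
        = (δ / Real.log 2) * (Real.log ρ⁻¹ + ρ * Cc) + (δ / Real.log 2) * (ρ * A) * D0 := by
      ring
    linarith [hmain, hhalf]
  calc D0 ≤ 2 * (1 + 2*L + δ + (δ / Real.log 2) * (Real.log ρ⁻¹ + ρ * Cc)) := hfinal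
    _ ≤ stabR0 δ L := by
        rw [stabR0, hρ, hA, hCc]
        exact le_max_right _ _


/-- Morse stability constant. -/
noncomputable def stabR (δ L : ℝ) : ℝ :=
  L * (L * (2 * stabR0 δ L + 2) + L^2) + L + stabR0 δ L + 1

/-- Morse lemma: every point of an `(L,L)`-quasi-geodesic is within `stabR δ L`
of any geodesic joining its endpoints. -/
lemma qgeod_near_geod {δ L : ℝ} (hδ : 0 ≤ δ) (hL : 1 ≤ L)
    (hgeo : GeodesicMetricSpace Z) (hhyp : DeltaHyp Z δ)
    (T : ℝ) (hT : 0 ≤ T) (c : ℝ → Z)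
    (hc : ∀ s ∈ Icc (0:ℝ) T, ∀ t ∈ Icc (0:ℝ) T,
        |s - t| / L - L ≤ dist (c s) (c t) ∧ dist (c s) (c t) ≤ L * |s - t| + L)
    (σ : ℝ → Z) (hσ : IsGeodesicFrom σ (c 0) (c T)) :
    ∀ t ∈ Icc (0:ℝ) T, infDist (c t) (geodImage σ (c 0) (c T)) ≤ stabR δ L := by
  intro t ht
  have hLpos : (0:ℝ) < L := by linarith
  set R0 := stabR0 δ L with hR0def
  have hR0 : 1 ≤ R0 := one_le_stabR0 δ L
  set dT := dist (c 0) (c T) with hdT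
  have hdT0 : 0 ≤ dT := dist_nonneg
  set F : ℝ → ℝ :=
    fun s => infDist (σ s) (c '' Icc 0 t) - infDist (σ s) (c '' Icc t T) with hF
  have hFcont : ContinuousOn F (Icc 0 dT) := by
    apply ContinuousOn.sub
    · exact (continuous_infDist_pt _).comp_continuousOn hσ.continuousOn
    · exact (continuous_infDist_pt _).comp_continuousOn hσ.continuousOn
  have hF0 : F 0 ≤ 0 := by
    have h1 : infDist (σ 0) (c '' Icc 0 t) = 0 := by
      rw [hσ.start]
      exact infDist_zero_of_mem ⟨0, ⟨le_rfl, ht.1⟩, rfl⟩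
    have h2 : 0 ≤ infDist (σ 0) (c '' Icc t T) := infDist_nonneg
    simp only [hF]
    linarith
  have hFd : 0 ≤ F dT := by
    have h1 : infDist (σ dT) (c '' Icc t T) = 0 := by
      rw [hdT, hσ.finish]
      exact infDist_zero_of_mem ⟨T, ⟨ht.2, le_rfl⟩, rfl⟩
    have h2 : 0 ≤ infDist (σ dT) (c '' Icc 0 t) := infDist_nonneg
    simp only [hF]
    linarith
  obtain ⟨sw, hsw, hFsw⟩ := intermediate_value_Icc hdT0 hFcont ⟨hF0, hFd⟩
  have hweq : infDist (σ sw) (c '' Icc 0 t) = infDist (σ sw) (c '' Icc t T) := by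
    have : F sw = 0 := hFsw
    simp only [hF] at this
    linarith
  have hkey : infDist (σ sw) (c '' Icc 0 T) ≤ R0 :=
    geod_near_qgeod hδ hL hgeo hhyp T hT c hc σ hσ sw hsw
  obtain ⟨q, hq, hdq⟩ := (infDist_lt_iff (⟨c 0, 0, ⟨le_rfl, hT⟩, rfl⟩ :
      (c '' Icc 0 T).Nonempty)).1 (lt_of_le_of_lt hkey (by linarith : R0 < R0 + 1))
  have hboth : infDist (σ sw) (c '' Icc 0 t) < R0 + 1 ∧
      infDist (σ sw) (c '' Icc t T) < R0 + 1 := by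
    obtain ⟨tq, htq, rfl⟩ := hq
    rcases le_total tq t with hcase | hcase
    · have h1 : infDist (σ sw) (c '' Icc 0 t) < R0 + 1 :=
        lt_of_le_of_lt (infDist_le_dist_of_mem ⟨tq, ⟨htq.1, hcase⟩, rfl⟩) hdq
      exact ⟨h1, by rw [← hweq]; exact h1⟩
    · have h1 : infDist (σ sw) (c '' Icc t T) < R0 + 1 :=
        lt_of_le_of_lt (infDist_le_dist_of_mem ⟨tq, ⟨hcase, htq.2⟩, rfl⟩) hdq
      exact ⟨by rw [hweq]; exact h1, h1⟩
  obtain ⟨q₁, hq₁, hdq₁⟩ := (infDist_lt_iff (⟨c 0, 0, ⟨le_rfl, ht.1⟩, rfl⟩ :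
      (c '' Icc 0 t).Nonempty)).1 hboth.1
  obtain ⟨q₂, hq₂, hdq₂⟩ := (infDist_lt_iff (⟨c t, t, ⟨le_rfl, ht.2⟩, rfl⟩ :
      (c '' Icc t T).Nonempty)).1 hboth.2
  obtain ⟨t₁, ht₁, rfl⟩ := hq₁
  obtain ⟨t₂, ht₂, rfl⟩ := hq₂
  have ht₁' : t₁ ∈ Icc (0:ℝ) T := ⟨ht₁.1, le_trans ht₁.2 ht.2⟩
  have ht₂' : t₂ ∈ Icc (0:ℝ) T := ⟨le_trans ht.1 ht₂.1, ht₂.2⟩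
  have hd12 : dist (c t₁) (c t₂) < 2*R0 + 2 := by
    calc dist (c t₁) (c t₂) ≤ dist (c t₁) (σ sw) + dist (σ sw) (c t₂) := dist_triangle _ _ _
      _ < (R0 + 1) + (R0 + 1) := by
          rw [dist_comm (c t₁) (σ sw)]
          linarith
      _ = 2*R0 + 2 := by ring
  have ht12 : |t₁ - t₂| ≤ L * (2*R0 + 2) + L^2 := by
    have h1 := (hc t₁ ht₁' t₂ ht₂').1
    have h2 : |t₁ - t₂| / L ≤ dist (c t₁) (c t₂) + L := by linarith
    calc |t₁ - t₂| = (|t₁ - t₂| / L) * L := by field_simp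
      _ ≤ (dist (c t₁) (c t₂) + L) * L := by nlinarith [abs_nonneg (t₁ - t₂)]
      _ ≤ ((2*R0 + 2) + L) * L := by nlinarith
      _ = L * (2*R0 + 2) + L^2 := by ring
  have htt1 : |t - t₁| ≤ |t₁ - t₂| := by
    rw [abs_of_nonneg (by linarith [ht₁.2] : 0 ≤ t - t₁),
      abs_of_nonpos (by linarith [ht₁.2, ht₂.1] : t₁ - t₂ ≤ 0)]
    linarith [ht₂.1]
  have hfin : dist (c t) (σ sw) ≤ stabR δ L := by
    have h1 := (hc t ht t₁ ht₁').2
    calc dist (c t) (σ sw) ≤ dist (c t) (c t₁) + dist (c t₁) (σ sw) := dist_triangle _ _ _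
      _ ≤ (L * |t - t₁| + L) + (R0 + 1) := by
          rw [dist_comm (c t₁) (σ sw)]
          linarith
      _ ≤ (L * (L * (2*R0 + 2) + L^2) + L) + (R0 + 1) := by nlinarith [htt1.trans ht12]
      _ = stabR δ L := by rw [stabR, hR0def]; ring
  exact le_trans (infDist_le_dist_of_mem (hσ.mem_image hsw)) hfin

end Stability


/-- Nearest point projection onto a `K`-quasiconvex subset coarsely
commutes with an `L`-qi embedding between `δ`-hyperbolic geodesic metric spaces. -/
theorem npp_commutes_with_qi_embedding (δ L K : ℝ)
    (hδ : 0 ≤ δ) (hL : 1 ≤ L) (hK : 0 ≤ K) :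
    ∃ D : ℝ, ∀ (X : Type*) (Y : Type*) [MetricSpace X] [MetricSpace Y],
      GeodesicMetricSpace X → GeodesicMetricSpace Y →
      DeltaHyp X δ → DeltaHyp Y δ →
      ∀ f : X → Y,
        (∀ x x' : X, dist x x' / L - L ≤ dist (f x) (f x') ∧
            dist (f x) (f x') ≤ L * dist x x' + L) →
        ∀ U : Set X, QuasiconvexSet K U →
          ∀ (x x' : X) (y' : Y),
            IsNPProj x U x' → IsNPProj (f x) (f '' U) y' →
            dist (f x') y' ≤ D := by
  have hLpos : (0:ℝ) < L := by linarith
  refine ⟨2 * stabR δ L + 2 * L * (3*δ + K + 1) + 2*L + 2, ?_⟩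
  intro X Y _ _ hgX hgY hhX hhY f hf U hU x x' y' hpx hpy
  -- y' is the image of a point of U
  obtain ⟨u'', hu''U, hfu''⟩ := hpy.1
  -- a geodesic in X from x to u''
  obtain ⟨γ, hγ⟩ := hgX x u''
  -- the projection x' is close to this geodesic
  have hproj := proj_near_geodesic hδ hK hgX hhX hU hpx hu''U hγ
  obtain ⟨p, hp, hdp⟩ := (infDist_lt_iff hγ.nonempty).1
    (lt_of_le_of_lt hproj (by linarith : 3*δ + K < 3*δ + K + 1))
  obtain ⟨tp, htp, rfl⟩ := hp
  -- the quasi-geodesic c = f ∘ γ in Y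
  set T := dist x u'' with hTdef
  set c : ℝ → Y := fun s => f (γ s) with hc
  have hcqi : ∀ s ∈ Icc (0:ℝ) T, ∀ t ∈ Icc (0:ℝ) T,
      |s - t| / L - L ≤ dist (c s) (c t) ∧ dist (c s) (c t) ≤ L * |s - t| + L := by
    intro s hs t htt
    have hst : dist (γ s) (γ t) = |s - t| := hγ.dist_eq hs htt
    have h := hf (γ s) (γ t)
    rw [hst] at h
    exact h
  have hc0 : c 0 = f x := by rw [hc]; show f (γ 0) = f x; rw [hγ.start]
  have hcT : c T = y' := by rw [hc]; show f (γ (dist x u'')) = y'; rw [hγ.finish, hfu'']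
  obtain ⟨σ, hσ⟩ := hgY (c 0) (c T)
  have hstab := qgeod_near_geod hδ hL hgY hhY T dist_nonneg c hcqi σ hσ tp htp
  obtain ⟨z, hz, hdz⟩ := (infDist_lt_iff hσ.nonempty).1
    (lt_of_le_of_lt hstab (lt_add_of_pos_right _ one_pos))
  obtain ⟨sz, hsz, rfl⟩ := hz
  have h1 : dist (c 0) (σ sz) = sz := hσ.dist_start hsz
  have h2 : dist (σ sz) (c T) = dist (c 0) (c T) - sz := hσ.dist_finish hsz
  -- y' is a nearest point projection of f x on f '' U
  have hnpp : dist (f x) y' ≤ dist (f x) (f x') := hpy.2 (f x') ⟨x', hpx.1, rfl⟩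
  -- f (γ tp) is close to f x'
  have hfpfx' : dist (c tp) (f x') ≤ L * (3*δ + K + 1) + L := by
    have h := (hf (γ tp) x').2
    have hd : dist (γ tp) x' < 3*δ + K + 1 := by rw [dist_comm]; exact hdp
    calc dist (c tp) (f x') = dist (f (γ tp)) (f x') := by rw [hc]
      _ ≤ L * dist (γ tp) x' + L := h
      _ ≤ L * (3*δ + K + 1) + L := by nlinarith
  -- the key comparison along the geodesic σ
  have hA : dist (c 0) (c T) ≤ dist (c 0) (σ sz) + dist (σ sz) (c tp) + dist (c tp) (f x') := by
    calc dist (c 0) (c T) = dist (f x) y' := by rw [hc0, hcT]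
      _ ≤ dist (f x) (f x') := hnpp
      _ = dist (c 0) (f x') := by rw [hc0]
      _ ≤ dist (c 0) (σ sz) + dist (σ sz) (f x') := dist_triangle _ _ _
      _ ≤ dist (c 0) (σ sz) + (dist (σ sz) (c tp) + dist (c tp) (f x')) := by
          linarith [dist_triangle (σ sz) (c tp) (f x')]
      _ = _ := by ring
  have hzy' : dist (σ sz) (c T) ≤ dist (σ sz) (c tp) + dist (c tp) (f x') := by
    rw [h2]
    linarith
  have hzp : dist (σ sz) (c tp) < stabR δ L + 1 := by rw [dist_comm]; exact hdz
  calc dist (f x') y' ≤ dist (f x') (c tp) + dist (c tp) y' := dist_triangle _ _ _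
    _ ≤ dist (f x') (c tp) + (dist (c tp) (σ sz) + dist (σ sz) y') := by
        linarith [dist_triangle (c tp) (σ sz) y']
    _ = dist (c tp) (f x') + (dist (σ sz) (c tp) + dist (σ sz) (c T)) := by
        rw [dist_comm (f x') (c tp), dist_comm (c tp) (σ sz), hcT]
    _ ≤ (L * (3*δ + K + 1) + L) + ((stabR δ L + 1) +
          ((stabR δ L + 1) + (L * (3*δ + K + 1) + L))) := by
        linarith [hzy']
    _ = 2 * stabR δ L + 2 * L * (3*δ + K + 1) + 2*L + 2 := by ring
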